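/- Let n be a positive integer, A a symmetric n×n real matrix with nonnegative entries, D the diagonal matrix with D_{ii} = Σ_{j=1}^n A_{ij}, and L = D − A. Then for every internal opinion vector x ∈ ℝ^n, the equilibrium expressed opinion vector z = (I + L)^{-1} x satisfies Σ_{i=1}^n z_i = Σ_{i=1}^n x_i; that is, on undirected graphs the overall expressed opinion equals the overall internal opinion. -/

import Mathlib

open Matrix in
/-- On undirected graphs (symmetric `A`), the overall equilibrium expressed opinion equals the
overall internal opinion: `∑ i, z_i = ∑ i, x_i` where `z = (I + L)⁻¹ x`. -/
theorem stmt_6 (n : ℕ) (hn : 0 < n) (A : Matrix (Fin n) (Fin n) ℝ)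
    (hA : ∀ i j, 0 ≤ A i j) (hsym : ∀ i j, A i j = A j i)
    (D : Matrix (Fin n) (Fin n) ℝ) (hD : D = Matrix.diagonal (fun i => ∑ j, A i j))
    (L : Matrix (Fin n) (Fin n) ℝ) (hL : L = D - A) :
    ∀ x : Fin n → ℝ, ∑ i, ((1 + L)⁻¹ *ᵥ x) i = ∑ i, x i := by
  subst hD hL
  set d : Fin n → ℝ := fun i => ∑ j, A i j with hd
  set L : Matrix (Fin n) (Fin n) ℝ := Matrix.diagonal d - A with hLdef
  -- L is Hermitian
  have hLherm : L.IsHermitian := by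
    rw [Matrix.IsHermitian]
    ext i j
    simp only [Matrix.conjTranspose_apply, Matrix.sub_apply, Matrix.diagonal_apply, star_sub,
      star_trivial, hLdef]
    by_cases h : i = j
    · subst h; simp
    · have h' : ¬ j = i := fun h' => h h'.symm
      simp [h, h', hsym j i]
  -- L is positive semidefinite
  have hquad : ∀ x : Fin n → ℝ,
      x ⬝ᵥ (L *ᵥ x) = (1/2) * ∑ i, ∑ j, A i j * (x i - x j)^2 := by
    intro x
    have key2 : ∑ i, ∑ j, A i j * x j ^ 2 = ∑ i, ∑ j, A i j * x i ^ 2 := by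
      rw [Finset.sum_comm]
      exact Finset.sum_congr rfl fun i _ => Finset.sum_congr rfl fun j _ => by rw [hsym]
    have lhs_eq : x ⬝ᵥ (L *ᵥ x)
        = (∑ i, ∑ j, A i j * x i ^ 2) - ∑ i, ∑ j, A i j * (x i * x j) := by
      simp only [hLdef, hd, dotProduct, Matrix.mulVec, dotProduct,
        Matrix.sub_apply, Matrix.diagonal_apply, sub_mul, ite_mul, zero_mul,
        Finset.sum_sub_distrib, Finset.sum_ite_eq, Finset.mem_univ, if_true, mul_sub]
      congr 1
      · refine Finset.sum_congr rfl fun i _ => ?_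
        rw [Finset.sum_mul, Finset.mul_sum]
        exact Finset.sum_congr rfl fun j _ => by ring
      · refine Finset.sum_congr rfl fun i _ => ?_
        rw [Finset.mul_sum]
        exact Finset.sum_congr rfl fun j _ => by ring
    rw [lhs_eq]
    have expand : ∀ i j : Fin n, A i j * (x i - x j)^2
        = A i j * x i ^ 2 + A i j * x j ^ 2 - 2 * (A i j * (x i * x j)) := fun i j => by ring
    simp_rw [expand, Finset.sum_sub_distrib, Finset.sum_add_distrib, key2, ← Finset.mul_sum]
    ring
  have hLpsd : L.PosSemidef := by
    refine Matrix.PosSemidef.of_dotProduct_mulVec_nonneg hLherm fun x => ?_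
    simp only [star_trivial]
    rw [hquad x]
    have : (0:ℝ) ≤ ∑ i, ∑ j, A i j * (x i - x j)^2 :=
      Finset.sum_nonneg fun i _ => Finset.sum_nonneg fun j _ =>
        mul_nonneg (hA i j) (sq_nonneg _)
    linarith
  have hPD : (1 + L).PosDef := Matrix.PosDef.add_posSemidef Matrix.PosDef.one hLpsd
  have hunit : IsUnit (1 + L) := hPD.isUnit
  -- column sums of 1 + L are one
  have hcol : (fun _ => (1:ℝ)) ᵥ* (1 + L) = fun _ => (1:ℝ) := by
    ext j
    simp only [Matrix.vecMul, dotProduct, Matrix.add_apply, Matrix.sub_apply,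
      Matrix.one_apply, Matrix.diagonal_apply, one_mul, hLdef, hd]
    rw [Finset.sum_add_distrib, Finset.sum_sub_distrib]
    have h1 : ∑ i, (if i = j then (1:ℝ) else 0) = 1 := by simp
    have h2 : ∑ i, (if i = j then ∑ k, A i k else 0) = ∑ k, A j k := by simp
    have h3 : ∑ i, A i j = ∑ k, A j k :=
      Finset.sum_congr rfl fun i _ => hsym i j
    rw [h1, h2, h3]; ring
  have hinvcol : (fun _ => (1:ℝ)) ᵥ* (1 + L)⁻¹ = fun _ => (1:ℝ) := by
    conv_lhs => rw [← hcol]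
    rw [Matrix.vecMul_vecMul, Matrix.mul_nonsing_inv _ ((Matrix.isUnit_iff_isUnit_det _).mp hunit),
      Matrix.vecMul_one]
  intro x
  have key : ∑ i, ((1 + L)⁻¹ *ᵥ x) i = ((fun _ => (1:ℝ)) ᵥ* (1 + L)⁻¹) ⬝ᵥ x := by
    rw [← Matrix.dotProduct_mulVec]
    simp [dotProduct]
  rw [key, hinvcol]
  simp [dotProduct]
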